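/- Let X be a real random variable with E[X] = 0, variance σ² > 0 and β₃ = E|X|³ < ∞, with characteristic function f(t) = E[e^{itX}]. Let α ∈ (0,1) and k = k(n) satisfy k(n)/n^α → 1. Then there exist constants K₋ and K₊ (independent of n, k and t) and an integer n₀ such that for all n ≥ n₀ and all real t with |t| ≤ σ√k/(4 β₃^{1/3}): | f( −√k t / ((n−k) σ) )^{n−k} − (1 − k t²/(2n)) | ≤ K₋ (t² + t⁴) k²/n², and | f( −√k t / ((n+k) σ) )^{n} − (1 − k t²/(2n)) | ≤ K₊ (t² + t⁴) k²/n². -/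

import Mathlib

open MeasureTheory ProbabilityTheory Filter Real Set
set_option maxHeartbeats 1000000

/-- Characteristic function of a measure on `ℝ`. -/
noncomputable def charFn (μ : Measure ℝ) (t : ℝ) : ℂ :=
  ∫ x, Complex.exp (Complex.I * (t * x)) ∂μ

lemma exp_I_bound1 (u : ℝ) : ‖Complex.exp (Complex.I * u) - 1‖ ≤ |u| := by
  have key : Complex.exp (Complex.I * u) - 1
      = ∫ v in (0:ℝ)..u, Complex.I * Complex.exp (Complex.I * v) := by
    rw [intervalIntegral.integral_eq_sub_of_hasDerivAt
      (f := fun v : ℝ => Complex.exp (Complex.I * v)) (by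
        intro x hx
        have : HasDerivAt (fun v : ℝ => Complex.exp (Complex.I * v))
            (Complex.I * Complex.exp (Complex.I * x)) x := by
          have h1 : HasDerivAt (fun v : ℝ => (Complex.I * v : ℂ)) Complex.I x := by
            simpa using ((hasDerivAt_id (x:ℂ)).const_mul Complex.I).comp_ofReal
          simpa [mul_comm] using h1.cexp
        exact this)
      (by apply Continuous.intervalIntegrable; continuity)]
    simp
  rw [key]
  have := intervalIntegral.norm_integral_le_of_norm_le_const
    (C := 1) (f := fun v : ℝ => Complex.I * Complex.exp (Complex.I * v)) (a := 0) (b := u) ?_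
  · simpa using this
  · intro x hx
    simp [Complex.norm_exp]

lemma exp_I_bound2 (u : ℝ) : ‖Complex.exp (Complex.I * u) - 1 - Complex.I * u‖ ≤ u ^ 2 := by
  have key : Complex.exp (Complex.I * u) - 1 - Complex.I * u
      = ∫ v in (0:ℝ)..u, (Complex.I * Complex.exp (Complex.I * v) - Complex.I) := by
    rw [intervalIntegral.integral_eq_sub_of_hasDerivAt
      (f := fun v : ℝ => Complex.exp (Complex.I * v) - 1 - Complex.I * v) (by
        intro x hx
        have h1 : HasDerivAt (fun v : ℝ => (Complex.I * v : ℂ)) Complex.I x := by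
          simpa using ((hasDerivAt_id (x:ℂ)).const_mul Complex.I).comp_ofReal
        have h2 : HasDerivAt (fun v : ℝ => Complex.exp (Complex.I * v))
            (Complex.I * Complex.exp (Complex.I * x)) x := by
          simpa [mul_comm] using h1.cexp
        exact (h2.sub_const 1).sub h1)
      (by apply Continuous.intervalIntegrable; continuity)]
    simp
  rw [key]
  have := intervalIntegral.norm_integral_le_of_norm_le_const
    (C := |u|) (f := fun v : ℝ => Complex.I * Complex.exp (Complex.I * v) - Complex.I)
    (a := 0) (b := u) ?_
  · calc ‖_‖ ≤ |u| * |u - 0| := this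
      _ = u ^ 2 := by rw [sub_zero, ← abs_mul, abs_mul_self, sq]
  · intro x hx
    have hxu : |x| ≤ |u| := by
      rcases Set.mem_uIoc.1 hx with h | h
      · simpa using abs_le_max_abs_abs h.1.le h.2
      · simpa using abs_le_max_abs_abs h.1.le h.2
    calc ‖Complex.I * Complex.exp (Complex.I * x) - Complex.I‖
        = ‖Complex.I * (Complex.exp (Complex.I * x) - 1)‖ := by ring_nf
      _ = ‖Complex.exp (Complex.I * x) - 1‖ := by
          rw [norm_mul, Complex.norm_I, one_mul]
      _ ≤ |x| := exp_I_bound1 x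
      _ ≤ |u| := hxu

lemma exp_I_bound3 (u : ℝ) :
    ‖Complex.exp (Complex.I * u) - 1 - Complex.I * u + (u:ℂ) ^ 2 / 2‖ ≤ |u| ^ 3 := by
  have key : Complex.exp (Complex.I * u) - 1 - Complex.I * u + (u:ℂ) ^ 2 / 2
      = ∫ v in (0:ℝ)..u,
          (Complex.I * Complex.exp (Complex.I * v) - Complex.I + (v:ℂ)) := by
    rw [intervalIntegral.integral_eq_sub_of_hasDerivAt
      (f := fun v : ℝ => Complex.exp (Complex.I * v) - 1 - Complex.I * v + (v:ℂ) ^ 2 / 2) (by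
        intro x hx
        have h1 : HasDerivAt (fun v : ℝ => (Complex.I * v : ℂ)) Complex.I x := by
          simpa using ((hasDerivAt_id (x:ℂ)).const_mul Complex.I).comp_ofReal
        have h2 : HasDerivAt (fun v : ℝ => Complex.exp (Complex.I * v))
            (Complex.I * Complex.exp (Complex.I * x)) x := by
          simpa [mul_comm] using h1.cexp
        have h3 : HasDerivAt (fun v : ℝ => ((v:ℂ) ^ 2 / 2)) (x:ℂ) x := by
          have : HasDerivAt (fun z : ℂ => z ^ 2 / 2) ((x:ℂ)) (x:ℂ) := by
            simpa using ((hasDerivAt_pow 2 ((x:ℂ))).div_const 2)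
          simpa using this.comp_ofReal
        exact ((h2.sub_const 1).sub h1).add h3)
      (by apply Continuous.intervalIntegrable; continuity)]
    simp
  rw [key]
  have := intervalIntegral.norm_integral_le_of_norm_le_const
    (C := u ^ 2) (f := fun v : ℝ => Complex.I * Complex.exp (Complex.I * v) - Complex.I + (v:ℂ))
    (a := 0) (b := u) ?_
  · calc ‖_‖ ≤ u ^ 2 * |u - 0| := this
      _ = |u| ^ 3 := by rw [sub_zero]; rw [show |u|^3 = u^2*|u| by rw [pow_succ, _root_.sq_abs]]
  · intro x hx
    have hxu : |x| ≤ |u| := by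
      rcases Set.mem_uIoc.1 hx with h | h
      · simpa using abs_le_max_abs_abs h.1.le h.2
      · simpa using abs_le_max_abs_abs h.1.le h.2
    calc ‖Complex.I * Complex.exp (Complex.I * x) - Complex.I + (x:ℂ)‖
        = ‖Complex.I * (Complex.exp (Complex.I * x) - 1 - Complex.I * x)‖ := by
          congr 1; push_cast; ring_nf; rw [Complex.I_sq]; ring
      _ = ‖Complex.exp (Complex.I * x) - 1 - Complex.I * x‖ := by
          rw [norm_mul, Complex.norm_I, one_mul]
      _ ≤ x ^ 2 := exp_I_bound2 x
      _ ≤ u ^ 2 := by rw [← _root_.sq_abs x, ← _root_.sq_abs u]; exact pow_le_pow_left₀ (abs_nonneg x) hxu 2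

lemma integrable_id_of_cube {μ : Measure ℝ} [IsProbabilityMeasure μ]
    (hint : Integrable (fun x => |x| ^ 3) μ) : Integrable (fun x : ℝ => x) μ := by
  apply Integrable.mono' ((integrable_const (1:ℝ)).add hint)
  · exact aestronglyMeasurable_id
  · filter_upwards with x
    simp only [Real.norm_eq_abs, Pi.add_apply]
    nlinarith [mul_nonneg (abs_nonneg x) (sq_nonneg (|x| - 1)), sq_nonneg (|x| - 1/2)]

lemma integrable_sq_of_cube {μ : Measure ℝ} [IsProbabilityMeasure μ]
    (hint : Integrable (fun x => |x| ^ 3) μ) : Integrable (fun x : ℝ => x ^ 2) μ := by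
  apply Integrable.mono' ((integrable_const (1:ℝ)).add hint)
  · exact (continuous_pow 2).aestronglyMeasurable
  · filter_upwards with x
    simp only [Real.norm_eq_abs, Pi.add_apply, _root_.abs_of_nonneg (sq_nonneg x)]
    nlinarith [mul_nonneg (sq_nonneg (|x| - 1)) (abs_nonneg x), sq_nonneg (|x| - 1),
      abs_nonneg x, _root_.sq_abs x]

lemma integrable_cexp {μ : Measure ℝ} [IsProbabilityMeasure μ] (s : ℝ) :
    Integrable (fun x : ℝ => Complex.exp (Complex.I * (s * x))) μ := by
  apply Integrable.mono' (integrable_const (1:ℝ))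
  · apply Continuous.aestronglyMeasurable; continuity
  · filter_upwards with x
    simp [Complex.norm_exp]

lemma charFn_sub_bound (μ : Measure ℝ) [IsProbabilityMeasure μ] (σ β₃ : ℝ)
    (hmean : (∫ x, x ∂μ) = 0) (hvar : (∫ x, x ^ 2 ∂μ) = σ ^ 2)
    (hint : Integrable (fun x => |x| ^ 3) μ) (hβ : β₃ = ∫ x, |x| ^ 3 ∂μ) (s : ℝ) :
    ‖charFn μ s - ((1 - s ^ 2 * σ ^ 2 / 2 : ℝ) : ℂ)‖ ≤ β₃ * |s| ^ 3 := by
  have hX := integrable_id_of_cube hint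
  have hX2 := integrable_sq_of_cube hint
  have hE := integrable_cexp (μ := μ) s
  set g : ℝ → ℂ := fun x =>
    Complex.exp (Complex.I * (s * x)) - 1 - Complex.I * (s * x) + (s * x : ℂ) ^ 2 / 2 with hg
  have hCint : Integrable (fun x : ℝ => Complex.I * (s * x : ℂ)) μ := by
    have h0 : Integrable (fun x : ℝ => ((x : ℝ) : ℂ)) μ := hX.ofReal
    have h := h0.const_mul (Complex.I * (s:ℂ))
    simp_rw [mul_assoc] at h
    exact h
  have hDint : Integrable (fun x : ℝ => ((s * x : ℂ)) ^ 2 / 2) μ := by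
    have : Integrable (fun x : ℝ => (((s * x) ^ 2 / 2 : ℝ) : ℂ)) μ := by
      apply Integrable.ofReal
      have h := (hX2.const_mul (s^2)).mul_const (2⁻¹ : ℝ)
      apply h.congr
      filter_upwards with x
      show _ = (s*x)^2/2
      rw [mul_pow, div_eq_mul_inv]
    convert this using 2 with x
    push_cast; ring
  have hAB : Integrable (fun x : ℝ => Complex.exp (Complex.I * (s * x)) - 1) μ := by
    exact hE.sub (integrable_const (1:ℂ))
  have hABC : Integrable
      (fun x : ℝ => Complex.exp (Complex.I * (s * x)) - 1 - Complex.I * (s * x : ℂ)) μ := by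
    exact hAB.sub hCint
  have hgint : Integrable g μ := hABC.add hDint
  have key : (∫ x, g x ∂μ) = charFn μ s - ((1 - s ^ 2 * σ ^ 2 / 2 : ℝ) : ℂ) := by
    rw [hg]
    rw [integral_add hABC hDint, integral_sub hAB hCint, integral_sub hE (integrable_const 1)]
    have hC : (∫ x, Complex.I * (s * x : ℂ) ∂μ) = 0 := by
      have : (∫ x : ℝ, Complex.I * (s * x : ℂ) ∂μ)
          = (Complex.I * s) * ∫ x : ℝ, ((x : ℝ) : ℂ) ∂μ := by
        rw [← integral_const_mul]; congr 1 with x; ring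
      rw [this, show (∫ x : ℝ, ((x:ℝ):ℂ) ∂μ) = ((∫ x, x ∂μ : ℝ) : ℂ) from integral_ofReal, hmean]
      simp
    have hD : (∫ x, ((s * x : ℂ)) ^ 2 / 2 ∂μ) = ((s ^ 2 * σ ^ 2 / 2 : ℝ) : ℂ) := by
      have h1 : (∫ x, ((s * x : ℂ)) ^ 2 / 2 ∂μ)
          = ∫ x : ℝ, (((s * x) ^ 2 / 2 : ℝ) : ℂ) ∂μ := by
        congr 1 with x; push_cast; ring
      rw [h1, show (∫ x : ℝ, (((s*x)^2/2 : ℝ):ℂ) ∂μ) = ((∫ x, (s*x)^2/2 ∂μ : ℝ) : ℂ) from integral_ofReal]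
      have h2 : (∫ x : ℝ, (s * x) ^ 2 / 2 ∂μ) = s ^ 2 / 2 * ∫ x, x ^ 2 ∂μ := by
        rw [← integral_const_mul]; congr 1 with x; ring
      rw [h2, hvar]
      norm_cast; ring
    rw [hC, hD, integral_const]
    simp only [measure_univ, ENNReal.toReal_one, one_smul, probReal_univ]
    rw [charFn]
    push_cast; ring
  rw [← key]
  calc ‖∫ x, g x ∂μ‖ ≤ ∫ x, ‖g x‖ ∂μ := norm_integral_le_integral_norm g
    _ ≤ ∫ x, |s| ^ 3 * |x| ^ 3 ∂μ := by
        apply integral_mono hgint.norm (hint.const_mul _)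
        intro x
        have h3 := exp_I_bound3 (s * x)
        have : g x = Complex.exp (Complex.I * ((s*x : ℝ) : ℂ)) - 1 - Complex.I * ((s*x : ℝ) : ℂ)
            + ((s*x : ℝ) : ℂ) ^ 2 / 2 := by rw [hg]; push_cast; ring_nf
        show ‖g x‖ ≤ |s| ^ 3 * |x| ^ 3
        rw [this]
        calc ‖_‖ ≤ |s * x| ^ 3 := h3
          _ = |s| ^ 3 * |x| ^ 3 := by rw [abs_mul, mul_pow]
    _ = β₃ * |s| ^ 3 := by rw [integral_const_mul, hβ]; ring

lemma norm_charFn_le_one (μ : Measure ℝ) [IsProbabilityMeasure μ] (s : ℝ) :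
    ‖charFn μ s‖ ≤ 1 := by
  calc ‖charFn μ s‖ ≤ ∫ x, ‖Complex.exp (Complex.I * (s * x))‖ ∂μ :=
        norm_integral_le_integral_norm _
    _ = ∫ x : ℝ, (1:ℝ) ∂μ := by congr 1 with x; simp [Complex.norm_exp]
    _ = 1 := by simp

lemma norm_pow_sub_pow_le' (z w : ℂ) (hz : ‖z‖ ≤ 1) (hw : ‖w‖ ≤ 1) (m : ℕ) :
    ‖z ^ m - w ^ m‖ ≤ m * ‖z - w‖ := by
  induction m with
  | zero => simp
  | succ m ih =>
    have key : z ^ (m+1) - w ^ (m+1) = z ^ m * (z - w) + (z ^ m - w ^ m) * w := by ring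
    calc ‖z ^ (m+1) - w ^ (m+1)‖ ≤ ‖z ^ m * (z - w)‖ + ‖(z ^ m - w ^ m) * w‖ := by
          rw [key]; exact norm_add_le _ _
      _ = ‖z‖ ^ m * ‖z - w‖ + ‖z ^ m - w ^ m‖ * ‖w‖ := by rw [norm_mul, norm_mul, norm_pow]
      _ ≤ 1 * ‖z - w‖ + (m * ‖z - w‖) * 1 := by
          gcongr
          exact pow_le_one₀ (norm_nonneg z) hz
      _ = (m + 1 : ℕ) * ‖z - w‖ := by push_cast; ring

lemma one_sub_pow_le (m : ℕ) {x : ℝ} (h0 : 0 ≤ x) (h1 : x ≤ 1) :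
    (1 - x) ^ m ≤ 1 - m * x + m ^ 2 * x ^ 2 / 2 := by
  induction m with
  | zero => simp
  | succ m ih =>
    have h3 : (1 - x) ^ (m + 1) ≤ (1 - ↑m * x + ↑m ^ 2 * x ^ 2 / 2) * (1 - x) := by
      rw [pow_succ]
      exact mul_le_mul_of_nonneg_right ih (by linarith)
    calc (1 - x) ^ (m+1) ≤ (1 - ↑m * x + ↑m ^ 2 * x ^ 2 / 2) * (1 - x) := h3
      _ ≤ 1 - (↑(m+1)) * x + (↑(m+1)) ^ 2 * x ^ 2 / 2 := by
          push_cast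
          nlinarith [mul_nonneg (mul_nonneg (sq_nonneg (m:ℝ)) (sq_nonneg x)) h0, sq_nonneg x]

lemma one_sub_pow_bound (m : ℕ) {x : ℝ} (h0 : 0 ≤ x) (h1 : x ≤ 1) :
    |(1 - x) ^ m - (1 - m * x)| ≤ m ^ 2 * x ^ 2 / 2 := by
  rw [abs_le]
  constructor
  · have := one_add_mul_le_pow (a := -x) (by linarith) m
    have h2 : 1 - m * x ≤ (1 - x) ^ m := by
      calc 1 - m*x = 1 + m * (-x) := by ring
        _ ≤ (1 + (-x)) ^ m := this
        _ = (1 - x) ^ m := by ring_nf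
    nlinarith [sq_nonneg ((m:ℝ) * x)]
  · linarith [one_sub_pow_le m h0 h1]

lemma combo (μ : Measure ℝ) [IsProbabilityMeasure μ] (σ β₃ : ℝ)
    (hmean : (∫ x, x ∂μ) = 0) (hvar : (∫ x, x ^ 2 ∂μ) = σ ^ 2)
    (hint : Integrable (fun x => |x| ^ 3) μ) (hβ : β₃ = ∫ x, |x| ^ 3 ∂μ)
    (m : ℕ) (s : ℝ) (hx1 : s ^ 2 * σ ^ 2 / 2 ≤ 1) :
    ‖charFn μ s ^ m - ((1 - m * (s ^ 2 * σ ^ 2 / 2) : ℝ) : ℂ)‖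
      ≤ m * (β₃ * |s| ^ 3) + m ^ 2 * (s ^ 2 * σ ^ 2 / 2) ^ 2 / 2 := by
  set x := s ^ 2 * σ ^ 2 / 2 with hxdef
  have hx0 : 0 ≤ x := by positivity
  have key : charFn μ s ^ m - ((1 - m * x : ℝ) : ℂ)
      = (charFn μ s ^ m - ((1 - x : ℝ) : ℂ) ^ m)
        + (((1 - x : ℝ) : ℂ) ^ m - ((1 - m * x : ℝ) : ℂ)) := by ring
  calc ‖charFn μ s ^ m - ((1 - m * x : ℝ) : ℂ)‖
      ≤ ‖charFn μ s ^ m - ((1 - x : ℝ) : ℂ) ^ m‖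
        + ‖((1 - x : ℝ) : ℂ) ^ m - ((1 - m * x : ℝ) : ℂ)‖ := by
        rw [key]; exact norm_add_le _ _
    _ ≤ m * (β₃ * |s| ^ 3) + m ^ 2 * x ^ 2 / 2 := by
        apply add_le_add
        · have hz := norm_charFn_le_one μ s
          have hw : ‖((1 - x : ℝ) : ℂ)‖ ≤ 1 := by
            rw [Complex.norm_real, Real.norm_eq_abs]
            rw [abs_le]; exact ⟨by linarith, by linarith⟩
          refine le_trans (norm_pow_sub_pow_le' _ _ hz hw m) ?_
          have hbd : ‖charFn μ s - ((1 - x : ℝ) : ℂ)‖ ≤ β₃ * |s| ^ 3 := by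
            have := charFn_sub_bound μ σ β₃ hmean hvar hint hβ s
            convert this using 3
          exact mul_le_mul_of_nonneg_left hbd (by positivity)
        · have : ((1 - x : ℝ) : ℂ) ^ m - ((1 - m * x : ℝ) : ℂ)
              = (((1 - x) ^ m - (1 - m * x) : ℝ) : ℂ) := by push_cast; ring
          rw [this, Complex.norm_real, Real.norm_eq_abs]
          exact one_sub_pow_bound m hx0 hx1

lemma arith_minus (σ B t r nr : ℝ) (hσ : 0 < σ) (hB : 0 < B) (hr : 1 ≤ r)
    (hn : 2 * r ^ 2 ≤ nr) (ht : |t| ≤ σ * r / (4 * B)) :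
    (nr - r ^ 2) * (B ^ 3 * (r * |t| / ((nr - r ^ 2) * σ)) ^ 3)
      + (nr - r ^ 2) ^ 2 * (r ^ 2 * t ^ 2 / (2 * (nr - r ^ 2) ^ 2)) ^ 2 / 2
      + |(nr - r ^ 2) * (r ^ 2 * t ^ 2 / (2 * (nr - r ^ 2) ^ 2)) - r ^ 2 * t ^ 2 / (2 * nr)|
      ≤ (B ^ 2 / σ ^ 2 + 2) * (t ^ 2 + t ^ 4) * (r ^ 2) ^ 2 / nr ^ 2 := by
  have hr0 : 0 < r := by linarith
  have hnr : 0 < nr := by nlinarith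
  have hD : 0 < nr - r ^ 2 := by nlinarith
  have hD2 : nr ≤ 2 * (nr - r ^ 2) := by nlinarith
  have habs : |t| ^ 2 = t ^ 2 := sq_abs t
  have ht3 : |t| ^ 3 ≤ t ^ 2 * (σ * r / (4 * B)) := by
    calc |t| ^ 3 = |t| ^ 2 * |t| := by ring
      _ ≤ |t| ^ 2 * (σ * r / (4 * B)) := by gcongr
      _ = t ^ 2 * (σ * r / (4 * B)) := by rw [habs]
  have hT1 : (nr - r ^ 2) * (B ^ 3 * (r * |t| / ((nr - r ^ 2) * σ)) ^ 3)
      ≤ B ^ 2 / σ ^ 2 * (t ^ 2 * (r ^ 2) ^ 2 / nr ^ 2) := by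
    have e1 : (nr - r ^ 2) * (B ^ 3 * (r * |t| / ((nr - r ^ 2) * σ)) ^ 3)
        = B ^ 3 * r ^ 3 * |t| ^ 3 / ((nr - r ^ 2) ^ 2 * σ ^ 3) := by
      field_simp
    rw [e1]
    calc B ^ 3 * r ^ 3 * |t| ^ 3 / ((nr - r ^ 2) ^ 2 * σ ^ 3)
        ≤ B ^ 3 * r ^ 3 * (t ^ 2 * (σ * r / (4 * B))) / ((nr - r ^ 2) ^ 2 * σ ^ 3) := by
          gcongr
      _ = (B ^ 2 * r ^ 4 * t ^ 2 / σ ^ 2) / (4 * (nr - r ^ 2) ^ 2) := by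
          field_simp
      _ ≤ (B ^ 2 * r ^ 4 * t ^ 2 / σ ^ 2) / nr ^ 2 := by
          apply div_le_div_of_nonneg_left (by positivity) (by positivity)
          nlinarith
      _ = B ^ 2 / σ ^ 2 * (t ^ 2 * (r ^ 2) ^ 2 / nr ^ 2) := by
          field_simp
  have hT2 : (nr - r ^ 2) ^ 2 * (r ^ 2 * t ^ 2 / (2 * (nr - r ^ 2) ^ 2)) ^ 2 / 2
      ≤ 1 / 2 * (t ^ 4 * (r ^ 2) ^ 2 / nr ^ 2) := by
    have e1 : (nr - r ^ 2) ^ 2 * (r ^ 2 * t ^ 2 / (2 * (nr - r ^ 2) ^ 2)) ^ 2 / 2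
        = r ^ 4 * t ^ 4 / (8 * (nr - r ^ 2) ^ 2) := by
      field_simp; ring
    rw [e1]
    calc r ^ 4 * t ^ 4 / (8 * (nr - r ^ 2) ^ 2)
        ≤ r ^ 4 * t ^ 4 / (2 * nr ^ 2) := by
          apply div_le_div_of_nonneg_left (by positivity) (by positivity)
          nlinarith
      _ = 1 / 2 * (t ^ 4 * (r ^ 2) ^ 2 / nr ^ 2) := by field_simp
  have hT3 : |(nr - r ^ 2) * (r ^ 2 * t ^ 2 / (2 * (nr - r ^ 2) ^ 2)) - r ^ 2 * t ^ 2 / (2 * nr)|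
      ≤ 1 * (t ^ 2 * (r ^ 2) ^ 2 / nr ^ 2) := by
    have e1 : (nr - r ^ 2) * (r ^ 2 * t ^ 2 / (2 * (nr - r ^ 2) ^ 2)) - r ^ 2 * t ^ 2 / (2 * nr)
        = (r ^ 2) ^ 2 * t ^ 2 / (2 * nr * (nr - r ^ 2)) := by
      field_simp; ring
    rw [e1, abs_of_nonneg (by positivity)]
    calc (r ^ 2) ^ 2 * t ^ 2 / (2 * nr * (nr - r ^ 2))
        ≤ (r ^ 2) ^ 2 * t ^ 2 / nr ^ 2 := by
          apply div_le_div_of_nonneg_left (by positivity) (by positivity)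
          nlinarith
      _ = 1 * (t ^ 2 * (r ^ 2) ^ 2 / nr ^ 2) := by ring
  have hfin : B ^ 2 / σ ^ 2 * (t ^ 2 * (r ^ 2) ^ 2 / nr ^ 2)
      + 1 / 2 * (t ^ 4 * (r ^ 2) ^ 2 / nr ^ 2) + 1 * (t ^ 2 * (r ^ 2) ^ 2 / nr ^ 2)
      ≤ (B ^ 2 / σ ^ 2 + 2) * (t ^ 2 + t ^ 4) * (r ^ 2) ^ 2 / nr ^ 2 := by
    have h1 : 0 ≤ t ^ 2 * (r ^ 2) ^ 2 / nr ^ 2 := by positivity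
    have h2 : 0 ≤ t ^ 4 * (r ^ 2) ^ 2 / nr ^ 2 := by positivity
    have h3 : 0 ≤ B ^ 2 / σ ^ 2 := by positivity
    have e : (B ^ 2 / σ ^ 2 + 2) * (t ^ 2 + t ^ 4) * (r ^ 2) ^ 2 / nr ^ 2
        = (B ^ 2 / σ ^ 2 + 2) * (t ^ 2 * (r ^ 2) ^ 2 / nr ^ 2)
          + (B ^ 2 / σ ^ 2 + 2) * (t ^ 4 * (r ^ 2) ^ 2 / nr ^ 2) := by ring
    rw [e]; nlinarith [mul_nonneg h3 h1, mul_nonneg h3 h2]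
  linarith [hT1, hT2, hT3, hfin]

lemma arith_plus (σ B t r nr : ℝ) (hσ : 0 < σ) (hB : 0 < B) (hr : 1 ≤ r)
    (hn : 2 * r ^ 2 ≤ nr) (ht : |t| ≤ σ * r / (4 * B)) :
    nr * (B ^ 3 * (r * |t| / ((nr + r ^ 2) * σ)) ^ 3)
      + nr ^ 2 * (r ^ 2 * t ^ 2 / (2 * (nr + r ^ 2) ^ 2)) ^ 2 / 2
      + |nr * (r ^ 2 * t ^ 2 / (2 * (nr + r ^ 2) ^ 2)) - r ^ 2 * t ^ 2 / (2 * nr)|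
      ≤ (B ^ 2 / σ ^ 2 + 2) * (t ^ 2 + t ^ 4) * (r ^ 2) ^ 2 / nr ^ 2 := by
  have hr0 : 0 < r := by linarith
  have hnr : 0 < nr := by nlinarith
  have hD : 0 < nr + r ^ 2 := by nlinarith
  have habs : |t| ^ 2 = t ^ 2 := sq_abs t
  have ht3 : |t| ^ 3 ≤ t ^ 2 * (σ * r / (4 * B)) := by
    calc |t| ^ 3 = |t| ^ 2 * |t| := by ring
      _ ≤ |t| ^ 2 * (σ * r / (4 * B)) := by gcongr
      _ = t ^ 2 * (σ * r / (4 * B)) := by rw [habs]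
  have hT1 : nr * (B ^ 3 * (r * |t| / ((nr + r ^ 2) * σ)) ^ 3)
      ≤ B ^ 2 / σ ^ 2 * (t ^ 2 * (r ^ 2) ^ 2 / nr ^ 2) := by
    have e1 : nr * (B ^ 3 * (r * |t| / ((nr + r ^ 2) * σ)) ^ 3)
        = nr * (B ^ 3 * r ^ 3 * |t| ^ 3) / ((nr + r ^ 2) ^ 3 * σ ^ 3) := by
      field_simp
    rw [e1]
    calc nr * (B ^ 3 * r ^ 3 * |t| ^ 3) / ((nr + r ^ 2) ^ 3 * σ ^ 3)
        ≤ nr * (B ^ 3 * r ^ 3 * (t ^ 2 * (σ * r / (4 * B)))) / ((nr + r ^ 2) ^ 3 * σ ^ 3) := by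
          gcongr
      _ = (B ^ 2 * r ^ 4 * t ^ 2 / σ ^ 2) * (nr / (4 * (nr + r ^ 2) ^ 3)) := by
          field_simp
      _ ≤ (B ^ 2 * r ^ 4 * t ^ 2 / σ ^ 2) * (1 / nr ^ 2) := by
          apply mul_le_mul_of_nonneg_left _ (by positivity)
          rw [div_le_div_iff₀ (by positivity) (by positivity)]
          have hc : nr ^ 3 ≤ (nr + r ^ 2) ^ 3 :=
            pow_le_pow_left₀ hnr.le (by nlinarith) 3
          nlinarith [hc]
      _ ≤ B ^ 2 / σ ^ 2 * (t ^ 2 * (r ^ 2) ^ 2 / nr ^ 2) := by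
          rw [show B ^ 2 / σ ^ 2 * (t ^ 2 * (r ^ 2) ^ 2 / nr ^ 2)
            = (B ^ 2 * r ^ 4 * t ^ 2 / σ ^ 2) * (1 / nr ^ 2) from by field_simp]
  have hT2 : nr ^ 2 * (r ^ 2 * t ^ 2 / (2 * (nr + r ^ 2) ^ 2)) ^ 2 / 2
      ≤ 1 / 2 * (t ^ 4 * (r ^ 2) ^ 2 / nr ^ 2) := by
    have e1 : nr ^ 2 * (r ^ 2 * t ^ 2 / (2 * (nr + r ^ 2) ^ 2)) ^ 2 / 2
        = nr ^ 2 * (r ^ 4 * t ^ 4) / (8 * (nr + r ^ 2) ^ 4) := by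
      field_simp; ring
    rw [e1, show 1 / 2 * (t ^ 4 * (r ^ 2) ^ 2 / nr ^ 2)
      = t ^ 4 * (r ^ 2) ^ 2 / (2 * nr ^ 2) from by ring]
    rw [div_le_div_iff₀ (by positivity) (by positivity)]
    have key : nr ^ 4 ≤ (nr + r ^ 2) ^ 4 := by
      apply pow_le_pow_left₀ hnr.le; nlinarith
    nlinarith [mul_le_mul_of_nonneg_left key (show (0:ℝ) ≤ t^4*r^4 by positivity),
      mul_nonneg (show (0:ℝ) ≤ t^4*r^4 by positivity) (show (0:ℝ) ≤ (nr+r^2)^4 by positivity)]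
  have hT3 : |nr * (r ^ 2 * t ^ 2 / (2 * (nr + r ^ 2) ^ 2)) - r ^ 2 * t ^ 2 / (2 * nr)|
      ≤ 3 / 2 * (t ^ 2 * (r ^ 2) ^ 2 / nr ^ 2) := by
    have e1 : nr * (r ^ 2 * t ^ 2 / (2 * (nr + r ^ 2) ^ 2)) - r ^ 2 * t ^ 2 / (2 * nr)
        = -(r ^ 2 * t ^ 2 * (2 * nr * r ^ 2 + r ^ 4) / (2 * nr * (nr + r ^ 2) ^ 2)) := by
      field_simp; ring
    rw [e1, abs_neg, abs_of_nonneg (by positivity), show 3 / 2 * (t ^ 2 * (r ^ 2) ^ 2 / nr ^ 2)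
      = 3 * (t ^ 2 * (r ^ 2) ^ 2) / (2 * nr ^ 2) from by ring]
    rw [div_le_div_iff₀ (by positivity) (by positivity)]
    have hk : r ^ 2 ≤ nr := by nlinarith
    have h1 : 2 * nr * r ^ 2 + r ^ 4 ≤ 3 * nr * r ^ 2 := by nlinarith
    have h2 : nr ^ 2 ≤ (nr + r ^ 2) ^ 2 := by nlinarith
    have hA : r ^ 2 * t ^ 2 * (2 * nr * r ^ 2 + r ^ 4) * (2 * nr ^ 2)
        ≤ r ^ 2 * t ^ 2 * (3 * nr * r ^ 2) * (2 * nr ^ 2) := by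
      apply mul_le_mul_of_nonneg_right _ (by positivity)
      exact mul_le_mul_of_nonneg_left h1 (by positivity)
    have hB2 : r ^ 2 * t ^ 2 * (3 * nr * r ^ 2) * (2 * nr ^ 2)
        ≤ 3 * (t ^ 2 * (r ^ 2) ^ 2) * (2 * nr * (nr + r ^ 2) ^ 2) := by
      have hq := mul_le_mul_of_nonneg_left h2 (show (0:ℝ) ≤ 6 * (t^2 * r^4) * nr by positivity)
      nlinarith [hq]
    linarith
  have hfin : B ^ 2 / σ ^ 2 * (t ^ 2 * (r ^ 2) ^ 2 / nr ^ 2)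
      + 1 / 2 * (t ^ 4 * (r ^ 2) ^ 2 / nr ^ 2) + 3 / 2 * (t ^ 2 * (r ^ 2) ^ 2 / nr ^ 2)
      ≤ (B ^ 2 / σ ^ 2 + 2) * (t ^ 2 + t ^ 4) * (r ^ 2) ^ 2 / nr ^ 2 := by
    have h1 : 0 ≤ t ^ 2 * (r ^ 2) ^ 2 / nr ^ 2 := by positivity
    have h2 : 0 ≤ t ^ 4 * (r ^ 2) ^ 2 / nr ^ 2 := by positivity
    have h3 : 0 ≤ B ^ 2 / σ ^ 2 := by positivity
    have e : (B ^ 2 / σ ^ 2 + 2) * (t ^ 2 + t ^ 4) * (r ^ 2) ^ 2 / nr ^ 2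
        = (B ^ 2 / σ ^ 2 + 2) * (t ^ 2 * (r ^ 2) ^ 2 / nr ^ 2)
          + (B ^ 2 / σ ^ 2 + 2) * (t ^ 4 * (r ^ 2) ^ 2 / nr ^ 2) := by ring
    rw [e]; nlinarith [mul_nonneg h3 h1, mul_nonneg h3 h2]
  linarith [hT1, hT2, hT3, hfin]

/-- Lemma `Proof1.3` of the paper: bounds on the characteristic function of the
small rescaled sums. -/
theorem small_sum_charfun_bounds
    (μ : Measure ℝ) [IsProbabilityMeasure μ]
    (σ β₃ : ℝ) (hσ : 0 < σ)
    (hmean : (∫ x, x ∂μ) = 0)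
    (hvar : (∫ x, x ^ 2 ∂μ) = σ ^ 2)
    (hint : Integrable (fun x => |x| ^ 3) μ)
    (hβ : β₃ = ∫ x, |x| ^ 3 ∂μ)
    (α : ℝ) (hα1 : 0 < α) (hα2 : α < 1)
    (k : ℕ → ℕ) (hkpos : ∀ n, 0 < k n)
    (hk : Tendsto (fun n => (k n : ℝ) / (n : ℝ) ^ α) atTop (nhds 1)) :
    ∃ (Kminus Kplus : ℝ) (n₀ : ℕ), ∀ n : ℕ, n₀ ≤ n → ∀ t : ℝ,
      |t| ≤ σ * Real.sqrt (k n) / (4 * β₃ ^ ((1 : ℝ) / 3)) →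
      ‖charFn μ (-(Real.sqrt (k n)) * t / (((n : ℝ) - (k n : ℝ)) * σ)) ^ (n - k n)
          - ((1 - (k n : ℝ) * t ^ 2 / (2 * n) : ℝ) : ℂ)‖
        ≤ Kminus * (t ^ 2 + t ^ 4) * (k n : ℝ) ^ 2 / (n : ℝ) ^ 2 ∧
      ‖charFn μ (-(Real.sqrt (k n)) * t / (((n : ℝ) + (k n : ℝ)) * σ)) ^ n
          - ((1 - (k n : ℝ) * t ^ 2 / (2 * n) : ℝ) : ℂ)‖
        ≤ Kplus * (t ^ 2 + t ^ 4) * (k n : ℝ) ^ 2 / (n : ℝ) ^ 2 := by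
  -- positivity of β₃
  have hβ0 : 0 ≤ β₃ := hβ ▸ integral_nonneg (fun x => by positivity)
  have hβpos : 0 < β₃ := by
    rcases hβ0.lt_or_eq with h | h
    · exact h
    · exfalso
      have h0 : ∫ x, |x| ^ 3 ∂μ = 0 := by rw [← hβ, ← h]
      have hae := (integral_eq_zero_iff_of_nonneg
        (f := fun x : ℝ => |x| ^ 3) (fun x => by positivity) hint).1 h0
      have hsq : (fun x : ℝ => x ^ 2) =ᵐ[μ] 0 := by
        filter_upwards [hae] with x hx
        simp only [Pi.zero_apply] at hx ⊢
        have h1 : |x| = 0 := (pow_eq_zero_iff (by norm_num : 3 ≠ 0)).1 hx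
        nlinarith [sq_abs x]
      have hz : ∫ x, x ^ 2 ∂μ = 0 := by rw [integral_congr_ae hsq]; simp
      nlinarith [hσ]
  set B : ℝ := β₃ ^ ((1 : ℝ) / 3) with hBdef
  have hB : 0 < B := Real.rpow_pos_of_pos hβpos _
  have hB3 : B ^ 3 = β₃ := by
    rw [hBdef, ← Real.rpow_natCast (β₃ ^ ((1:ℝ)/3)) 3, ← Real.rpow_mul hβpos.le]
    norm_num
  set ε : ℝ := min (1/2) (B/σ) with hεdef
  have hε : 0 < ε := lt_min (by norm_num) (by positivity)
  have hk0 : Tendsto (fun n : ℕ => (k n : ℝ) / n) atTop (nhds 0) := by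
    have h2 : Tendsto (fun x : ℝ => x ^ (α - 1)) atTop (nhds 0) := by
      simpa [neg_sub] using tendsto_rpow_neg_atTop (show 0 < 1 - α by linarith)
    have h3 : Tendsto (fun n : ℕ => ((n : ℝ)) ^ (α - 1)) atTop (nhds 0) :=
      h2.comp tendsto_natCast_atTop_atTop
    have h4 := hk.mul h3
    rw [mul_zero] at h4
    apply h4.congr'
    filter_upwards [eventually_ge_atTop 1] with n hn
    have hn0 : (0 : ℝ) < n := by exact_mod_cast hn
    have hα0 : (0 : ℝ) < (n : ℝ) ^ α := Real.rpow_pos_of_pos hn0 α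
    have e : (n : ℝ) ^ (α - 1) = (n : ℝ) ^ α / n := by
      rw [Real.rpow_sub hn0, Real.rpow_one]
    rw [e]
    field_simp
  obtain ⟨n₀, hn₀⟩ := eventually_atTop.1
    ((hk0.eventually (gt_mem_nhds hε)).and (eventually_ge_atTop 1))
  refine ⟨B ^ 2 / σ ^ 2 + 2, B ^ 2 / σ ^ 2 + 2, max n₀ 1, ?_⟩
  intro n hn t ht
  obtain ⟨hkε, hn1⟩ := hn₀ n (le_trans (le_max_left _ _) hn)
  have hnr : (0 : ℝ) < n := by exact_mod_cast hn1
  set r : ℝ := Real.sqrt (k n) with hrdef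
  have hkr1 : (1 : ℝ) ≤ (k n : ℝ) := by exact_mod_cast hkpos n
  have hr2 : r ^ 2 = (k n : ℝ) := Real.sq_sqrt (by positivity)
  have hr1 : 1 ≤ r := by nlinarith [Real.sqrt_nonneg ((k n : ℝ))]
  have hr0 : 0 < r := by linarith
  have hkn : (k n : ℝ) < ε * n := by
    rw [div_lt_iff₀ hnr] at hkε; linarith [hkε]
  have hεhalf : ε ≤ 1/2 := min_le_left _ _
  have hεB : ε ≤ B / σ := min_le_right _ _
  have h2k : 2 * (k n : ℝ) ≤ n := by nlinarith
  have h2r : 2 * r ^ 2 ≤ (n : ℝ) := by rw [hr2]; exact h2k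
  have hKn : k n ≤ n := by exact_mod_cast le_trans (by linarith : (k n : ℝ) ≤ (n : ℝ)) le_rfl
  have ht' : |t| ≤ σ * r / (4 * B) := ht
  have ht2 : t ^ 2 ≤ σ ^ 2 * (k n : ℝ) / (16 * B ^ 2) := by
    calc t ^ 2 = |t| ^ 2 := (sq_abs t).symm
      _ ≤ (σ * r / (4 * B)) ^ 2 := pow_le_pow_left₀ (abs_nonneg t) ht' 2
      _ = σ ^ 2 * (k n : ℝ) / (16 * B ^ 2) := by rw [← hr2]; field_simp; ring
  have hεσ : ε * σ ≤ B := (le_div_iff₀ hσ).1 hεB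
  have hkB : σ * (k n : ℝ) ≤ B * n := by nlinarith
  have hkB2 : σ ^ 2 * (k n : ℝ) ^ 2 ≤ B ^ 2 * (n : ℝ) ^ 2 := by
    have hq := pow_le_pow_left₀ (by positivity : (0:ℝ) ≤ σ * (k n : ℝ)) hkB 2
    nlinarith [hq]
  constructor
  · -- minus case
    have hD : (0:ℝ) < (n : ℝ) - (k n : ℝ) := by linarith
    have hD2 : (n : ℝ) ≤ 2 * ((n : ℝ) - (k n : ℝ)) := by linarith
    set s : ℝ := -(Real.sqrt (k n)) * t / (((n : ℝ) - (k n : ℝ)) * σ) with hsdef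
    have e0 : s ^ 2 = (k n : ℝ) * t ^ 2 / (((n:ℝ) - (k n : ℝ)) ^ 2 * σ ^ 2) := by
      rw [hsdef, div_pow, neg_mul, neg_sq, mul_pow, mul_pow, ← hrdef, hr2]
    have hs2 : s ^ 2 * σ ^ 2 / 2 = (k n : ℝ) * t ^ 2 / (2 * ((n:ℝ) - (k n : ℝ)) ^ 2) := by
      rw [e0]
      field_simp
    have hx1 : s ^ 2 * σ ^ 2 / 2 ≤ 1 := by
      rw [hs2, div_le_one (by positivity)]
      have s1 : (k n : ℝ) * t ^ 2 ≤ (k n : ℝ) * (σ ^ 2 * (k n : ℝ) / (16 * B ^ 2)) :=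
        mul_le_mul_of_nonneg_left ht2 (by positivity)
      have s6 : σ ^ 2 * (k n : ℝ) ^ 2 / (16 * B ^ 2) ≤ (n : ℝ) ^ 2 / 16 := by
        rw [div_le_div_iff₀ (by positivity) (by positivity)]
        linarith only [hkB2]
      have s5 : (n : ℝ) ^ 2 ≤ 4 * ((n:ℝ) - (k n : ℝ)) ^ 2 := by
        linarith only [mul_le_mul hD2 hD2 hnr.le (by linarith : (0:ℝ) ≤ 2 * ((n:ℝ) - (k n:ℝ)))]
      have e : (k n : ℝ) * (σ ^ 2 * (k n : ℝ) / (16 * B ^ 2))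
          = σ ^ 2 * (k n : ℝ) ^ 2 / (16 * B ^ 2) := by ring
      rw [e] at s1
      linarith only [s1, s5, s6, sq_nonneg ((n:ℝ) - (k n : ℝ))]
    have est := combo μ σ β₃ hmean hvar hint hβ (n - k n) s hx1
    have hm : ((n - k n : ℕ) : ℝ) = (n:ℝ) - (k n : ℝ) := by
      rw [Nat.cast_sub hKn]
    have habs_s : |s| = r * |t| / (((n:ℝ) - (k n : ℝ)) * σ) := by
      rw [hsdef, ← hrdef, abs_div, abs_mul, abs_neg, abs_of_nonneg hr0.le,
        abs_mul, abs_of_nonneg (by linarith : (0:ℝ) ≤ (n:ℝ) - (k n : ℝ)),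
        abs_of_nonneg hσ.le]
    have tri : ‖charFn μ s ^ (n - k n) - ((1 - (k n : ℝ) * t ^ 2 / (2 * n) : ℝ) : ℂ)‖
        ≤ ‖charFn μ s ^ (n - k n)
            - ((1 - ((n - k n : ℕ) : ℝ) * (s ^ 2 * σ ^ 2 / 2) : ℝ) : ℂ)‖
          + |((n - k n : ℕ) : ℝ) * (s ^ 2 * σ ^ 2 / 2) - (k n : ℝ) * t ^ 2 / (2 * n)| := by
      have e : charFn μ s ^ (n - k n) - ((1 - (k n : ℝ) * t ^ 2 / (2 * n) : ℝ) : ℂ)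
          = (charFn μ s ^ (n - k n)
              - ((1 - ((n - k n : ℕ) : ℝ) * (s ^ 2 * σ ^ 2 / 2) : ℝ) : ℂ))
            - ((((((n - k n : ℕ) : ℝ) * (s ^ 2 * σ ^ 2 / 2)
              - (k n : ℝ) * t ^ 2 / (2 * n)) : ℝ) : ℂ)) := by push_cast; ring
      rw [e]
      refine le_trans (norm_sub_le _ _) ?_
      rw [Complex.norm_real, Real.norm_eq_abs]
    have final := arith_minus σ B t r n hσ hB hr1 h2r ht'
    calc ‖charFn μ s ^ (n - k n) - ((1 - (k n : ℝ) * t ^ 2 / (2 * n) : ℝ) : ℂ)‖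
        ≤ ((n - k n : ℕ) : ℝ) * (β₃ * |s| ^ 3)
            + ((n - k n : ℕ) : ℝ) ^ 2 * (s ^ 2 * σ ^ 2 / 2) ^ 2 / 2
          + |((n - k n : ℕ) : ℝ) * (s ^ 2 * σ ^ 2 / 2) - (k n : ℝ) * t ^ 2 / (2 * n)| :=
          le_trans tri (add_le_add est le_rfl)
      _ = ((n:ℝ) - r ^ 2) * (B ^ 3 * (r * |t| / (((n:ℝ) - r ^ 2) * σ)) ^ 3)
            + ((n:ℝ) - r ^ 2) ^ 2 * (r ^ 2 * t ^ 2 / (2 * ((n:ℝ) - r ^ 2) ^ 2)) ^ 2 / 2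
            + |((n:ℝ) - r ^ 2) * (r ^ 2 * t ^ 2 / (2 * ((n:ℝ) - r ^ 2) ^ 2))
                - r ^ 2 * t ^ 2 / (2 * (n:ℝ))| := by
          rw [hm, habs_s, hs2, ← hB3, ← hr2]
      _ ≤ (B ^ 2 / σ ^ 2 + 2) * (t ^ 2 + t ^ 4) * ((r ^ 2) : ℝ) ^ 2 / (n : ℝ) ^ 2 := final
      _ = (B ^ 2 / σ ^ 2 + 2) * (t ^ 2 + t ^ 4) * (k n : ℝ) ^ 2 / (n : ℝ) ^ 2 := by rw [hr2]
  · -- plus case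
    have hD : (0:ℝ) < (n : ℝ) + (k n : ℝ) := by linarith
    have hD2 : (n : ℝ) ≤ 2 * ((n : ℝ) + (k n : ℝ)) := by linarith
    set s : ℝ := -(Real.sqrt (k n)) * t / (((n : ℝ) + (k n : ℝ)) * σ) with hsdef
    have e0 : s ^ 2 = (k n : ℝ) * t ^ 2 / (((n:ℝ) + (k n : ℝ)) ^ 2 * σ ^ 2) := by
      rw [hsdef, div_pow, neg_mul, neg_sq, mul_pow, mul_pow, ← hrdef, hr2]
    have hs2 : s ^ 2 * σ ^ 2 / 2 = (k n : ℝ) * t ^ 2 / (2 * ((n:ℝ) + (k n : ℝ)) ^ 2) := by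
      rw [e0]
      field_simp
    have hx1 : s ^ 2 * σ ^ 2 / 2 ≤ 1 := by
      rw [hs2, div_le_one (by positivity)]
      have s1 : (k n : ℝ) * t ^ 2 ≤ (k n : ℝ) * (σ ^ 2 * (k n : ℝ) / (16 * B ^ 2)) :=
        mul_le_mul_of_nonneg_left ht2 (by positivity)
      have s6 : σ ^ 2 * (k n : ℝ) ^ 2 / (16 * B ^ 2) ≤ (n : ℝ) ^ 2 / 16 := by
        rw [div_le_div_iff₀ (by positivity) (by positivity)]
        linarith only [hkB2]
      have s5 : (n : ℝ) ^ 2 ≤ 4 * ((n:ℝ) + (k n : ℝ)) ^ 2 := by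
        linarith only [mul_le_mul hD2 hD2 hnr.le (by linarith : (0:ℝ) ≤ 2 * ((n:ℝ) + (k n:ℝ)))]
      have e : (k n : ℝ) * (σ ^ 2 * (k n : ℝ) / (16 * B ^ 2))
          = σ ^ 2 * (k n : ℝ) ^ 2 / (16 * B ^ 2) := by ring
      rw [e] at s1
      linarith only [s1, s5, s6, sq_nonneg ((n:ℝ) + (k n : ℝ))]
    have est := combo μ σ β₃ hmean hvar hint hβ n s hx1
    have habs_s : |s| = r * |t| / (((n:ℝ) + (k n : ℝ)) * σ) := by
      rw [hsdef, ← hrdef, abs_div, abs_mul, abs_neg, abs_of_nonneg hr0.le,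
        abs_mul, abs_of_nonneg (by linarith : (0:ℝ) ≤ (n:ℝ) + (k n : ℝ)),
        abs_of_nonneg hσ.le]
    have tri : ‖charFn μ s ^ n - ((1 - (k n : ℝ) * t ^ 2 / (2 * n) : ℝ) : ℂ)‖
        ≤ ‖charFn μ s ^ n - ((1 - (n : ℝ) * (s ^ 2 * σ ^ 2 / 2) : ℝ) : ℂ)‖
          + |(n : ℝ) * (s ^ 2 * σ ^ 2 / 2) - (k n : ℝ) * t ^ 2 / (2 * n)| := by
      have e : charFn μ s ^ n - ((1 - (k n : ℝ) * t ^ 2 / (2 * n) : ℝ) : ℂ)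
          = (charFn μ s ^ n - ((1 - (n : ℝ) * (s ^ 2 * σ ^ 2 / 2) : ℝ) : ℂ))
            - (((((n : ℝ) * (s ^ 2 * σ ^ 2 / 2)
              - (k n : ℝ) * t ^ 2 / (2 * n)) : ℝ) : ℂ)) := by push_cast; ring
      rw [e]
      refine le_trans (norm_sub_le _ _) ?_
      rw [Complex.norm_real, Real.norm_eq_abs]
    have final := arith_plus σ B t r n hσ hB hr1 h2r ht'
    calc ‖charFn μ s ^ n - ((1 - (k n : ℝ) * t ^ 2 / (2 * n) : ℝ) : ℂ)‖
        ≤ (n : ℝ) * (β₃ * |s| ^ 3) + (n : ℝ) ^ 2 * (s ^ 2 * σ ^ 2 / 2) ^ 2 / 2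
          + |(n : ℝ) * (s ^ 2 * σ ^ 2 / 2) - (k n : ℝ) * t ^ 2 / (2 * n)| :=
          le_trans tri (add_le_add est le_rfl)
      _ = (n:ℝ) * (B ^ 3 * (r * |t| / (((n:ℝ) + r ^ 2) * σ)) ^ 3)
            + (n:ℝ) ^ 2 * (r ^ 2 * t ^ 2 / (2 * ((n:ℝ) + r ^ 2) ^ 2)) ^ 2 / 2
            + |(n:ℝ) * (r ^ 2 * t ^ 2 / (2 * ((n:ℝ) + r ^ 2) ^ 2))
                - r ^ 2 * t ^ 2 / (2 * (n:ℝ))| := by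
          rw [habs_s, hs2, ← hB3, ← hr2]
      _ ≤ (B ^ 2 / σ ^ 2 + 2) * (t ^ 2 + t ^ 4) * ((r ^ 2) : ℝ) ^ 2 / (n : ℝ) ^ 2 := final
      _ = (B ^ 2 / σ ^ 2 + 2) * (t ^ 2 + t ^ 4) * (k n : ℝ) ^ 2 / (n : ℝ) ^ 2 := by rw [hr2]
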